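/- Let (X,d) be a locally compact, complete metric space and let F : X → K(X) be a continuous multivalued map with compact values whose induced operator F : K(X) → K(X), F(B) = ⋃_{x∈B} F(x), has an attractor A* with basin of attraction U ⊆ K(X): F(A*) = A*, U is open in (K(X), d_H), A* ∈ U, and d_H(Fⁿ(B), A*) → 0 for all B ∈ U. Then there exists a metric D on U inducing the same topology as the restriction of d_H to U such that the operator F restricted to U is a contraction with respect to D: for some c ∈ [0,1), D(F(B), F(B')) ≤ c·D(B, B') for all B, B' ∈ U. -/

import Mathlib

open TopologicalSpace Metric Filter

open Set

namespace JanosAux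

variable {X : Type*} [MetricSpace X]

lemma edist_ne_top' (B C : NonemptyCompacts X) :
    EMetric.hausdorffEdist (B : Set X) (C : Set X) ≠ ⊤ :=
  Metric.hausdorffEdist_ne_top_of_nonempty_of_bounded B.nonempty C.nonempty
    B.isCompact.isBounded C.isCompact.isBounded

lemma dist_le_of_mem_dist {B C : NonemptyCompacts X} {r : ℝ} (h0 : 0 ≤ r)
    (h1 : ∀ x ∈ (B : Set X), ∃ y ∈ (C : Set X), dist x y ≤ r)
    (h2 : ∀ y ∈ (C : Set X), ∃ x ∈ (B : Set X), dist y x ≤ r) :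
    dist B C ≤ r := by
  rw [NonemptyCompacts.dist_eq]
  exact hausdorffDist_le_of_mem_dist h0 h1 h2

lemma exists_close_of_dist_lt {B C : NonemptyCompacts X} {r : ℝ} (h : dist B C < r)
    {x : X} (hx : x ∈ (B : Set X)) : ∃ y ∈ (C : Set X), dist x y < r := by
  rw [NonemptyCompacts.dist_eq] at h
  exact exists_dist_lt_of_hausdorffDist_lt hx h (edist_ne_top' B C)

lemma infDist_le_dist_of_mem' {B C : NonemptyCompacts X} {x : X} (hx : x ∈ (B : Set X)) :
    infDist x (C : Set X) ≤ dist B C := by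
  rw [NonemptyCompacts.dist_eq]
  exact infDist_le_hausdorffDist_of_mem hx (edist_ne_top' B C)

lemma exists_infDist_point (C : NonemptyCompacts X) (x : X) :
    ∃ y ∈ (C : Set X), dist x y = infDist x (C : Set X) := by
  obtain ⟨y, hy, h⟩ := C.isCompact.exists_infDist_eq_dist C.nonempty x
  exact ⟨y, hy, h.symm⟩

lemma subset_cthickening_of_dist_le {B C : NonemptyCompacts X} {r : ℝ} (h : dist B C ≤ r) :
    (B : Set X) ⊆ cthickening r (C : Set X) := by
  intro x hx
  obtain ⟨y, hy, hxy⟩ := exists_infDist_point C x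
  exact mem_cthickening_of_dist_le x y r _ hy
    (by rw [hxy]; exact (infDist_le_dist_of_mem' hx).trans h)

lemma isClosed_subsets {C : Set X} (hC : IsClosed C) (hne : C.Nonempty) :
    IsClosed {B : NonemptyCompacts X | (B : Set X) ⊆ C} := by
  rw [← isOpen_compl_iff]
  rw [Metric.isOpen_iff]
  intro B hB
  obtain ⟨x, hxB, hxC⟩ : ∃ x ∈ (B : Set X), x ∉ C := by
    by_contra h
    push_neg at h
    exact hB h
  have hr : 0 < infDist x C := (hC.notMem_iff_infDist_pos hne).1 hxC
  refine ⟨infDist x C / 2, by linarith, ?_⟩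
  intro C' hC'
  rw [Metric.mem_ball] at hC'
  intro hsub
  obtain ⟨y, hyC', hxy⟩ := exists_close_of_dist_lt (by rwa [dist_comm] at hC') hxB
  have h1 : infDist x C ≤ dist x y + infDist y C := by
    rw [add_comm]
    exact infDist_le_infDist_add_dist
  have h2 : infDist y C = 0 := ((hC.mem_iff_infDist_zero hne).1 (hsub hyC'))
  rw [h2] at h1
  linarith

lemma isCompact_subsets [CompleteSpace X] {C : Set X} (hC : IsCompact C) (hne : C.Nonempty) :
    IsCompact {B : NonemptyCompacts X | (B : Set X) ⊆ C} := by
  refine TotallyBounded.isCompact_of_isClosed ?_ (isClosed_subsets hC.isClosed hne)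
  rw [Metric.totallyBounded_iff]
  intro ε hε
  obtain ⟨u, hufin, hcov⟩ := (Metric.totallyBounded_iff.1 hC.totallyBounded) (ε / 3)
    (by linarith)
  refine ⟨{T : NonemptyCompacts X | (T : Set X) ⊆ u}, ?_, ?_⟩
  · have : {T : NonemptyCompacts X | (T : Set X) ⊆ u} =
        (fun T : NonemptyCompacts X => (T : Set X)) ⁻¹' {s | s ⊆ u} := rfl
    rw [this]
    exact Set.Finite.preimage (Set.injOn_of_injective SetLike.coe_injective)
      hufin.finite_subsets
  · intro B hB
    set v : Set X := {y ∈ u | ∃ x ∈ (B : Set X), dist x y < ε / 3} with hv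
    have hvu : v ⊆ u := fun y hy => hy.1
    have hvfin : v.Finite := hufin.subset hvu
    have hvne : v.Nonempty := by
      obtain ⟨x, hx⟩ := B.nonempty
      obtain ⟨y, hy, hxy⟩ := mem_iUnion₂.1 (hcov (hB hx))
      exact ⟨y, hy, x, hx, by rwa [Metric.mem_ball] at hxy⟩
    set T : NonemptyCompacts X := ⟨⟨v, hvfin.isCompact⟩, hvne⟩ with hT
    have hTv : (T : Set X) = v := rfl
    have hdist : dist B T ≤ 2 * ε / 3 := by
      refine dist_le_of_mem_dist (by linarith) ?_ ?_
      · intro x hx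
        obtain ⟨y, hy, hxy⟩ := mem_iUnion₂.1 (hcov (hB hx))
        rw [Metric.mem_ball] at hxy
        refine ⟨y, ?_, by linarith [hxy.le]⟩
        rw [hTv]
        exact ⟨hy, x, hx, hxy⟩
      · intro y hy
        rw [hTv] at hy
        obtain ⟨_, x, hx, hxy⟩ := hy
        exact ⟨x, hx, by rw [dist_comm]; linarith [hxy.le]⟩
    refine mem_iUnion₂.2 ⟨T, ?_, ?_⟩
    · rw [Set.mem_setOf_eq, hTv]
      exact hvu
    · rw [Metric.mem_ball]
      have : (0:ℝ) < ε := hε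
      linarith


section Dyn

variable {F : X → NonemptyCompacts X} {FK : NonemptyCompacts X → NonemptyCompacts X}

lemma FK_mono (hFK : ∀ B : NonemptyCompacts X, (FK B : Set X) = ⋃ x ∈ (B : Set X), (F x : Set X))
    {B C : NonemptyCompacts X} (h : (B : Set X) ⊆ (C : Set X)) :
    (FK B : Set X) ⊆ (FK C : Set X) := by
  rw [hFK, hFK]
  exact Set.biUnion_subset_biUnion_left h

lemma FK_iter_mono
    (hFK : ∀ B : NonemptyCompacts X, (FK B : Set X) = ⋃ x ∈ (B : Set X), (F x : Set X))
    {B C : NonemptyCompacts X} (h : (B : Set X) ⊆ (C : Set X)) (n : ℕ) :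
    (FK^[n] B : Set X) ⊆ (FK^[n] C : Set X) := by
  induction n with
  | zero => simpa using h
  | succ n ih =>
    rw [Function.iterate_succ_apply', Function.iterate_succ_apply']
    exact FK_mono hFK ih

lemma FK_iter_fixed {A : NonemptyCompacts X} (hfix : FK A = A) (n : ℕ) : FK^[n] A = A :=
  Function.iterate_fixed hfix n

lemma FK_iter_subset_A
    (hFK : ∀ B : NonemptyCompacts X, (FK B : Set X) = ⋃ x ∈ (B : Set X), (F x : Set X))
    {A : NonemptyCompacts X} (hfix : FK A = A) {B : NonemptyCompacts X}
    (h : (B : Set X) ⊆ (A : Set X)) (n : ℕ) :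
    (FK^[n] B : Set X) ⊆ (A : Set X) := by
  have := FK_iter_mono hFK h n
  rwa [FK_iter_fixed hfix] at this

lemma cont_iter (hFKcont : Continuous FK) (n : ℕ) : Continuous (FK^[n]) := by
  induction n with
  | zero => simpa using continuous_id
  | succ n ih =>
    rw [Function.iterate_succ]
    exact ih.comp hFKcont

lemma zone [LocallyCompactSpace X] (A : NonemptyCompacts X) {U : Set (NonemptyCompacts X)}
    (hUopen : IsOpen U) (hAU : A ∈ U) :
    ∃ δz > 0, (∀ B : NonemptyCompacts X, dist B A ≤ δz → B ∈ U) ∧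
      IsCompact (cthickening δz (A : Set X)) := by
  obtain ⟨δ₁, hδ₁, hball⟩ := Metric.mem_nhds_iff.1 (hUopen.mem_nhds hAU)
  obtain ⟨K, hK, hKint⟩ := exists_compact_superset A.isCompact
  obtain ⟨δ₂, hδ₂, hsub⟩ := A.isCompact.exists_cthickening_subset_open isOpen_interior hKint
  refine ⟨min (δ₁ / 2) δ₂, by positivity, ?_, ?_⟩
  · intro B hB
    apply hball
    rw [Metric.mem_ball]
    have := hB.trans (min_le_left _ _)
    linarith
  · exact hK.of_isClosed_subset isClosed_cthickening
      ((cthickening_mono (min_le_right _ _) _).trans (hsub.trans interior_subset))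

def thickNC (A : NonemptyCompacts X) (δ : ℝ) (h : IsCompact (cthickening δ (A : Set X))) :
    NonemptyCompacts X :=
  ⟨⟨cthickening δ (A : Set X), h⟩, A.nonempty.mono (self_subset_cthickening _)⟩

lemma thickNC_coe (A : NonemptyCompacts X) (δ : ℝ) (h : IsCompact (cthickening δ (A : Set X))) :
    (thickNC A δ h : Set X) = cthickening δ (A : Set X) := rfl

lemma dist_thickNC_le (A : NonemptyCompacts X) {δ : ℝ} (hδ : 0 ≤ δ)
    (h : IsCompact (cthickening δ (A : Set X))) : dist (thickNC A δ h) A ≤ δ := by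
  refine dist_le_of_mem_dist hδ ?_ ?_
  · intro x hx
    rw [thickNC_coe, A.isCompact.cthickening_eq_biUnion_closedBall hδ] at hx
    obtain ⟨y, hy, hxy⟩ := mem_iUnion₂.1 hx
    exact ⟨y, hy, hxy⟩
  · intro y hy
    exact ⟨y, self_subset_cthickening _ hy, by simp [hδ]⟩

lemma attracted_of_shift {A B : NonemptyCompacts X} (N : ℕ)
    (h : Tendsto (fun n => dist (FK^[n] (FK^[N] B)) A) atTop (nhds 0)) :
    Tendsto (fun n => dist (FK^[n] B) A) atTop (nhds 0) := by
  have heq : (fun n => dist (FK^[n] (FK^[N] B)) A) = fun n => dist (FK^[n + N] B) A := by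
    funext n
    rw [Function.iterate_add_apply]
  rw [heq] at h
  exact (tendsto_add_atTop_iff_nat N).1 h

end Dyn

section Stab

variable {F : X → NonemptyCompacts X} {FK : NonemptyCompacts X → NonemptyCompacts X}
variable {A : NonemptyCompacts X}

theorem exists_ingredients [CompleteSpace X]
    (hFKcont : Continuous FK)
    (hFK : ∀ B : NonemptyCompacts X, (FK B : Set X) = ⋃ x ∈ (B : Set X), (F x : Set X))
    (hfix : FK A = A) {δz : ℝ} (hδz : 0 < δz)
    (hcz : IsCompact (cthickening δz (A : Set X)))
    (hz1 : ∀ B : NonemptyCompacts X, dist B A ≤ δz →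
      Tendsto (fun n => dist (FK^[n] B) A) atTop (nhds 0))
    {ε₀ : ℝ} (hε₀ : 0 < ε₀) (hε₀z : ε₀ ≤ δz)
    (hbad : ∀ δ > 0, ∃ B : NonemptyCompacts X, dist B A < δ ∧ ∃ n, ε₀ ≤ dist (FK^[n] B) A) :
    ∀ η > 0, ∀ N : ℕ, ∃ (E' : NonemptyCompacts X) (n : ℕ),
      (E' : Set X) ⊆ (A : Set X) ∧ dist E' A < η ∧ N ≤ n ∧ ε₀ ≤ dist (FK^[n] E') A := by
  -- the thickened zone
  set Th : NonemptyCompacts X := thickNC A δz hcz with hTh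
  have hThd : dist Th A ≤ δz := dist_thickNC_le A hδz.le hcz
  have hu : Tendsto (fun n => dist (FK^[n] Th) A) atTop (nhds 0) := hz1 Th hThd
  -- bad sequence
  have hwit : ∀ k : ℕ, ∃ B : NonemptyCompacts X,
      dist B A < min ε₀ (1 / (k + 1)) ∧ ∃ n, ε₀ ≤ dist (FK^[n] B) A := by
    intro k
    refine hbad _ (lt_min hε₀ ?_)
    positivity
  choose Bk hBk1 hBk2 using hwit
  set nk : ℕ → ℕ := fun k => Nat.find (hBk2 k) with hnkdef
  have hnkspec : ∀ k, ε₀ ≤ dist (FK^[nk k] (Bk k)) A := fun k => Nat.find_spec (hBk2 k)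
  have hnkpre : ∀ k, ∀ j < nk k, dist (FK^[j] (Bk k)) A < ε₀ := by
    intro k j hj
    have := Nat.find_min (hBk2 k) hj
    linarith [not_le.1 this]
  have hBkz : ∀ k, dist (Bk k) A ≤ δz := fun k =>
    ((hBk1 k).le.trans ((min_le_left _ _).trans hε₀z))
  -- Bk tends to A
  have hBkA : Tendsto Bk atTop (nhds A) := by
    rw [tendsto_iff_dist_tendsto_zero]
    refine squeeze_zero (fun k => dist_nonneg) (fun k => ?_) tendsto_one_div_add_atTop_nhds_zero_nat
    exact ((hBk1 k).le.trans (min_le_right _ _))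
  -- nk tends to infinity
  have hnk : Tendsto nk atTop atTop := by
    rw [Filter.tendsto_atTop]
    intro J
    have hj : ∀ j : ℕ, ∀ᶠ k in atTop, dist (FK^[j] (Bk k)) A < ε₀ := by
      intro j
      have hc : Tendsto (fun k => dist (FK^[j] (Bk k)) A) atTop
          (nhds (dist (FK^[j] A) A)) :=
        (Tendsto.dist (((cont_iter hFKcont j).tendsto A).comp hBkA) tendsto_const_nhds)
      rw [FK_iter_fixed hfix j, dist_self] at hc
      exact hc.eventually_lt_const hε₀
    have hall : ∀ᶠ k in atTop, ∀ j ∈ Finset.range (J + 1), dist (FK^[j] (Bk k)) A < ε₀ :=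
      (Finset.eventually_all _).2 (fun j _ => hj j)
    filter_upwards [hall] with k hk
    by_contra hJk
    push_neg at hJk
    have := hnkspec k
    have hlt : nk k < J + 1 := by omega
    have := hk (nk k) (Finset.mem_range.2 hlt)
    linarith
  -- ultrafilter on k
  obtain ⟨𝒰, h𝒰⟩ := Ultrafilter.exists_le (atTop : Filter ℕ)
  -- the backward sequences
  set a : ℕ → ℕ → NonemptyCompacts X := fun m k => FK^[nk k - 1 - m] (Bk k) with ha
  have hCne : (cthickening δz (A : Set X)).Nonempty :=
    A.nonempty.mono (self_subset_cthickening _)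
  have hSA' : IsCompact {B : NonemptyCompacts X | (B : Set X) ⊆ cthickening δz (A : Set X)} :=
    isCompact_subsets hcz hCne
  have hpre_ev : ∀ m : ℕ, ∀ᶠ k in atTop, dist (a m k) A < ε₀ := by
    intro m
    filter_upwards [hnk.eventually_ge_atTop 1] with k hk
    exact hnkpre k _ (by omega)
  have haS : ∀ m : ℕ, ∀ᶠ k in atTop,
      a m k ∈ {B : NonemptyCompacts X | (B : Set X) ⊆ cthickening δz (A : Set X)} := by
    intro m
    filter_upwards [hpre_ev m] with k hk
    exact subset_cthickening_of_dist_le (hk.le.trans hε₀z)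
  have hEx : ∀ m : ℕ, ∃ E : NonemptyCompacts X,
      (E : Set X) ⊆ cthickening δz (A : Set X) ∧ Tendsto (a m) (𝒰 : Filter ℕ) (nhds E) := by
    intro m
    obtain ⟨E, hE1, hE2⟩ := hSA'.ultrafilter_le_nhds' (𝒰.map (a m))
      (by rw [Ultrafilter.mem_map]; exact h𝒰 (haS m))
    exact ⟨E, hE1, hE2⟩
  choose E hES hEtend using hEx
  have hnk𝒰 : ∀ J : ℕ, ∀ᶠ k in (𝒰 : Filter ℕ), J ≤ nk k := fun J =>
    h𝒰 (hnk.eventually_ge_atTop J)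
  -- E m is a subset of A
  have hEA : ∀ m, (E m : Set X) ⊆ (A : Set X) := by
    intro m x hx
    have h0 : ∀ θ : ℝ, 0 < θ → infDist x (A : Set X) ≤ 0 + θ := by
      intro θ hθ
      have ev1 : ∀ᶠ k in (𝒰 : Filter ℕ), dist (a m k) (E m) < θ / 2 :=
        (Metric.tendsto_nhds.1 (hEtend m)) (θ / 2) (by linarith)
      have hsub : Tendsto (fun k => nk k - 1 - m) atTop atTop := by
        rw [Filter.tendsto_atTop]
        intro J
        filter_upwards [hnk.eventually_ge_atTop (J + m + 1)] with k hk
        omega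
      have ev2 : ∀ᶠ k in (𝒰 : Filter ℕ), dist (FK^[nk k - 1 - m] Th) A < θ / 2 :=
        h𝒰 ((hu.comp hsub).eventually_lt_const (by linarith))
      obtain ⟨k, hk1, hk2⟩ := (ev1.and ev2).exists
      have hxE : x ∈ (E m : Set X) := hx
      obtain ⟨y, hy, hxy⟩ := exists_close_of_dist_lt
        (by rw [dist_comm] at hk1; exact hk1) hxE
      have hyTh : y ∈ (FK^[nk k - 1 - m] Th : Set X) := by
        refine FK_iter_mono hFK ?_ _ hy
        rw [thickNC_coe]
        exact subset_cthickening_of_dist_le (hBkz k)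
      have h1 : infDist y (A : Set X) ≤ dist (FK^[nk k - 1 - m] Th) A :=
        infDist_le_dist_of_mem' hyTh
      have h2 : infDist x (A : Set X) ≤ infDist y (A : Set X) + dist x y :=
        infDist_le_infDist_add_dist
      linarith
    have h00 : infDist x (A : Set X) ≤ 0 := le_of_forall_pos_le_add (fun ε hε => h0 ε hε)
    have hz : infDist x (A : Set X) = 0 := le_antisymm h00 infDist_nonneg
    have := (mem_closure_iff_infDist_zero A.nonempty).2 hz
    rwa [A.isCompact.isClosed.closure_eq] at this
  -- dist (E m) A ≤ ε₀
  have hEdist : ∀ m, dist (E m) A ≤ ε₀ := by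
    intro m
    have ht : Tendsto (fun k => dist (a m k) A) (𝒰 : Filter ℕ) (nhds (dist (E m) A)) :=
      (hEtend m).dist tendsto_const_nhds
    have hev : ∀ᶠ k in (𝒰 : Filter ℕ), dist (a m k) A < ε₀ := h𝒰 (hpre_ev m)
    exact le_of_tendsto ht (hev.mono (fun k hk => hk.le))
  -- coherence
  have hcoh : ∀ m, FK (E (m + 1)) = E m := by
    intro m
    have t1 : Tendsto (fun k => FK (a (m + 1) k)) (𝒰 : Filter ℕ) (nhds (FK (E (m + 1)))) :=
      (hFKcont.tendsto _).comp (hEtend (m + 1))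
    have heq : ∀ᶠ k in (𝒰 : Filter ℕ), FK (a (m + 1) k) = a m k := by
      filter_upwards [hnk𝒰 (m + 2)] with k hk
      have h1 : FK (FK^[nk k - 1 - (m + 1)] (Bk k)) =
          FK^[nk k - 1 - (m + 1) + 1] (Bk k) :=
        (Function.iterate_succ_apply' FK _ _).symm
      rw [h1]
      congr 1
      omega
    exact tendsto_nhds_unique (t1.congr' heq) (hEtend m)
  have hiter : ∀ i m, i ≤ m → FK^[i] (E m) = E (m - i) := by
    intro i
    induction i with
    | zero => intro m _; simp
    | succ i ih =>
      intro m him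
      rw [Function.iterate_succ_apply', ih m (by omega)]
      have : m - i = (m - (i + 1)) + 1 := by omega
      rw [this, hcoh]
  -- the bad limit Z
  set Z : NonemptyCompacts X := FK (E 0) with hZdef
  have hZ : ε₀ ≤ dist Z A := by
    have t1 : Tendsto (fun k => FK (a 0 k)) (𝒰 : Filter ℕ) (nhds Z) :=
      (hFKcont.tendsto _).comp (hEtend 0)
    have heq : ∀ᶠ k in (𝒰 : Filter ℕ), FK (a 0 k) = FK^[nk k] (Bk k) := by
      filter_upwards [hnk𝒰 1] with k hk
      have h1 : FK (FK^[nk k - 1 - 0] (Bk k)) = FK^[nk k - 1 - 0 + 1] (Bk k) :=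
        (Function.iterate_succ_apply' FK _ _).symm
      rw [h1]
      congr 1
      omega
    have t2 : Tendsto (fun k => dist (FK^[nk k] (Bk k)) A) (𝒰 : Filter ℕ)
        (nhds (dist Z A)) := ((t1.congr' heq).dist tendsto_const_nhds)
    exact ge_of_tendsto t2 (Eventually.of_forall (fun k => hnkspec k))
  have hEmZ : ∀ m, FK^[m + 1] (E m) = Z := by
    intro m
    rw [Function.iterate_succ_apply', hiter m m le_rfl]
    simp [hZdef]
  -- limit of the E's
  obtain ⟨𝒱, h𝒱⟩ := Ultrafilter.exists_le (atTop : Filter ℕ)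
  have hSA : IsCompact {B : NonemptyCompacts X | (B : Set X) ⊆ (A : Set X)} :=
    isCompact_subsets A.isCompact A.nonempty
  obtain ⟨P, hPA, hPle⟩ := hSA.ultrafilter_le_nhds' (𝒱.map E)
    (by rw [Ultrafilter.mem_map]; exact Eventually.of_forall (fun m => hEA m))
  have hPtend : Tendsto E (𝒱 : Filter ℕ) (nhds P) := by
    rw [Filter.Tendsto, ← Ultrafilter.coe_map]; exact hPle
  have hPdist : dist P A ≤ ε₀ :=
    le_of_tendsto (hPtend.dist tendsto_const_nhds)
      (Eventually.of_forall (fun m => hEdist m))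
  have hPattr : Tendsto (fun n => dist (FK^[n] P) A) atTop (nhds 0) :=
    hz1 P (hPdist.trans hε₀z)
  have hPs : ∀ s : ℕ, Tendsto (fun m => E (m - s)) (𝒱 : Filter ℕ) (nhds (FK^[s] P)) := by
    intro s
    have t1 : Tendsto (fun m => FK^[s] (E m)) (𝒱 : Filter ℕ) (nhds (FK^[s] P)) :=
      ((cont_iter hFKcont s).tendsto P).comp hPtend
    refine t1.congr' ?_
    filter_upwards [h𝒱 (eventually_ge_atTop s)] with m hm
    exact hiter s m hm
  -- conclusion
  intro η hη N
  obtain ⟨s, hs1, hs2⟩ : ∃ s, N ≤ s ∧ dist (FK^[s] P) A < η / 2 := by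
    have h2 : ∀ᶠ s in atTop, dist (FK^[s] P) A < η / 2 :=
      hPattr.eventually_lt_const (by linarith)
    exact ((eventually_ge_atTop N).and h2).exists
  have ev1 : ∀ᶠ m in (𝒱 : Filter ℕ), dist (E (m - s)) (FK^[s] P) < η / 2 :=
    (Metric.tendsto_nhds.1 (hPs s)) (η / 2) (by linarith)
  have ev2 : ∀ᶠ m in (𝒱 : Filter ℕ), 2 * s + N + 1 ≤ m := h𝒱 (eventually_ge_atTop _)
  obtain ⟨m, hm1, hm2⟩ := (ev1.and ev2).exists
  refine ⟨E (m - s), (m - s) + 1, hEA _, ?_, by omega, ?_⟩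
  · calc dist (E (m - s)) A ≤ dist (E (m - s)) (FK^[s] P) + dist (FK^[s] P) A :=
        dist_triangle _ _ _
      _ < η := by linarith
  · rw [hEmZ (m - s)]
    exact hZ

end Stab

section Stab2

variable {F : X → NonemptyCompacts X} {FK : NonemptyCompacts X → NonemptyCompacts X}
variable {A : NonemptyCompacts X}

theorem stability [CompleteSpace X] [LocallyCompactSpace X]
    (hFKcont : Continuous FK)
    (hFK : ∀ B : NonemptyCompacts X, (FK B : Set X) = ⋃ x ∈ (B : Set X), (F x : Set X))
    (hfix : FK A = A) {U : Set (NonemptyCompacts X)} (hUopen : IsOpen U) (hAU : A ∈ U)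
    (hattr : ∀ B ∈ U, Tendsto (fun n => dist (FK^[n] B) A) atTop (nhds 0)) :
    ∀ ε > 0, ∃ δ > 0, ∀ B : NonemptyCompacts X, dist B A < δ →
      ∀ n, dist (FK^[n] B) A < ε := by
  obtain ⟨δz, hδz, hz1U, hcz⟩ := zone A hUopen hAU
  have hz1 : ∀ B : NonemptyCompacts X, dist B A ≤ δz →
      Tendsto (fun n => dist (FK^[n] B) A) atTop (nhds 0) :=
    fun B h => hattr B (hz1U B h)
  by_contra hcon
  push_neg at hcon
  obtain ⟨ε₁, hε₁, hbad₁⟩ := hcon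
  set ε₀ : ℝ := min ε₁ δz with hε₀def
  have hε₀ : 0 < ε₀ := lt_min hε₁ hδz
  have hε₀z : ε₀ ≤ δz := min_le_right _ _
  have hbad : ∀ δ > 0, ∃ B : NonemptyCompacts X, dist B A < δ ∧ ∃ n, ε₀ ≤ dist (FK^[n] B) A := by
    intro δ hδ
    obtain ⟨B, hB1, n, hB2⟩ := hbad₁ δ hδ
    exact ⟨B, hB1, n, (min_le_left _ _).trans hB2⟩
  have hING := exists_ingredients hFKcont hFK hfix hδz hcz hz1 hε₀ hε₀z hbad
  -- uniform continuity of iterates on subsets of A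
  have hSA : IsCompact {B : NonemptyCompacts X | (B : Set X) ⊆ (A : Set X)} :=
    isCompact_subsets A.isCompact A.nonempty
  have hUC : ∀ n : ℕ, ∃ ρ > 0, ∀ P Q : NonemptyCompacts X, (P : Set X) ⊆ (A : Set X) →
      (Q : Set X) ⊆ (A : Set X) → dist P Q < ρ →
      dist (FK^[n] P) (FK^[n] Q) < ε₀ / 4 := by
    intro n
    have h1 := hSA.uniformContinuousOn_of_continuous ((cont_iter hFKcont n).continuousOn)
    rw [Metric.uniformContinuousOn_iff] at h1
    obtain ⟨ρ, hρ, hh⟩ := h1 (ε₀ / 4) (by linarith)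
    exact ⟨ρ, hρ, fun P Q hP hQ hd => hh P hP Q hQ hd⟩
  -- one nesting stage
  have hstage : ∀ η : ℝ, 0 < η → ∀ N : ℕ,
      ∃ p : NonemptyCompacts X × ℕ × ℝ × X,
        (p.1 : Set X) ⊆ (A : Set X) ∧ dist p.1 A < η ∧ N ≤ p.2.1 ∧
        0 < p.2.2.1 ∧ p.2.2.1 ≤ η ∧ p.2.2.2 ∈ (A : Set X) ∧
        (∀ S : NonemptyCompacts X, (S : Set X) ⊆ (A : Set X) →
          (S : Set X) ⊆ cthickening p.2.2.1 (p.1 : Set X) →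
          ε₀ / 4 ≤ infDist p.2.2.2 (FK^[p.2.1] S : Set X)) := by
    intro η hη N
    obtain ⟨E', n, hE'A, hE'd, hnN, hbadn⟩ := hING η hη N
    obtain ⟨ρ, hρ, hucn⟩ := hUC n
    set σ : ℝ := min (ρ / 2) η with hσdef
    have hσ : 0 < σ := lt_min (by linarith) hη
    have hFKE'A : (FK^[n] E' : Set X) ⊆ (A : Set X) := FK_iter_subset_A hFK hfix hE'A n
    obtain ⟨aa, haaA, haa⟩ : ∃ aa ∈ (A : Set X), ε₀ / 2 ≤ infDist aa (FK^[n] E' : Set X) := by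
      by_contra hconA
      push_neg at hconA
      have hle : dist A (FK^[n] E') ≤ ε₀ / 2 := by
        refine dist_le_of_mem_dist (by linarith) ?_ ?_
        · intro x hx
          obtain ⟨y, hy, hxy⟩ := exists_infDist_point (FK^[n] E') x
          exact ⟨y, hy, by rw [hxy]; exact (hconA x hx).le⟩
        · intro y hy
          exact ⟨y, hFKE'A hy, by rw [dist_self]; linarith⟩
      rw [dist_comm] at hle
      linarith
    -- fattened set
    have hGcl : IsClosed (cthickening σ (E' : Set X) ∩ (A : Set X)) :=
      isClosed_cthickening.inter A.isCompact.isClosed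
    have hGcpt : IsCompact (cthickening σ (E' : Set X) ∩ (A : Set X)) :=
      A.isCompact.of_isClosed_subset hGcl inter_subset_right
    have hGne : (cthickening σ (E' : Set X) ∩ (A : Set X)).Nonempty := by
      obtain ⟨x, hx⟩ := E'.nonempty
      exact ⟨x, self_subset_cthickening _ hx, hE'A hx⟩
    set G : NonemptyCompacts X := ⟨⟨cthickening σ (E' : Set X) ∩ (A : Set X), hGcpt⟩, hGne⟩
      with hGdef
    have hGcoe : (G : Set X) = cthickening σ (E' : Set X) ∩ (A : Set X) := rfl
    have hGA : (G : Set X) ⊆ (A : Set X) := by rw [hGcoe]; exact inter_subset_right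
    have hGE' : dist G E' ≤ σ := by
      refine dist_le_of_mem_dist hσ.le ?_ ?_
      · intro x hx
        rw [hGcoe] at hx
        have hx1 := hx.1
        rw [E'.isCompact.cthickening_eq_biUnion_closedBall hσ.le] at hx1
        obtain ⟨y, hy, hxy⟩ := mem_iUnion₂.1 hx1
        exact ⟨y, hy, hxy⟩
      · intro y hy
        refine ⟨y, ?_, by rw [dist_self]; exact hσ.le⟩
        rw [hGcoe]
        exact ⟨self_subset_cthickening _ hy, hE'A hy⟩
    have hGclose : dist (FK^[n] G) (FK^[n] E') < ε₀ / 4 := by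
      refine hucn G E' hGA hE'A (lt_of_le_of_lt hGE' ?_)
      calc σ ≤ ρ / 2 := min_le_left _ _
        _ < ρ := by linarith
    have haaG : ε₀ / 4 ≤ infDist aa (FK^[n] G : Set X) := by
      have h1 : infDist aa (FK^[n] E' : Set X) ≤
          infDist aa (FK^[n] G : Set X) + dist (FK^[n] G) (FK^[n] E') := by
        rw [NonemptyCompacts.dist_eq]
        exact infDist_le_infDist_add_hausdorffDist (edist_ne_top' _ _)
      linarith
    refine ⟨⟨E', n, σ, aa⟩, hE'A, hE'd, hnN, hσ, min_le_right _ _, haaA, ?_⟩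
    intro S hSA' hSfat
    have hsub : (S : Set X) ⊆ (G : Set X) := by
      rw [hGcoe]
      exact fun x hx => ⟨hSfat hx, hSA' hx⟩
    have hsub2 : (FK^[n] S : Set X) ⊆ (FK^[n] G : Set X) := FK_iter_mono hFK hsub n
    calc ε₀ / 4 ≤ infDist aa (FK^[n] G : Set X) := haaG
      _ ≤ infDist aa (FK^[n] S : Set X) :=
        infDist_le_infDist_of_subset hsub2 (FK^[n] S).nonempty
  -- choose stage data
  choose stageF hs1 hs2 hs3 hs4 hs5 hs6 hs7 using hstage
  set η₀ : ℝ := δz / 4 with hη₀def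
  have hη₀ : 0 < η₀ := by positivity
  -- recursive construction of stages
  let f : ℕ → {p : NonemptyCompacts X × ℕ × ℝ × X // 0 < p.2.2.1} :=
    fun j => Nat.rec ⟨stageF η₀ hη₀ 0, hs4 η₀ hη₀ 0⟩
      (fun _ q => ⟨stageF (q.1.2.2.1 / 8) (div_pos q.2 (by norm_num)) (q.1.2.1 + 1),
        hs4 _ _ _⟩) j
  set E' : ℕ → NonemptyCompacts X := fun j => (f j).1.1 with hE'def
  set nn : ℕ → ℕ := fun j => (f j).1.2.1 with hnndef
  set σ : ℕ → ℝ := fun j => (f j).1.2.2.1 with hσdef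
  set aa : ℕ → X := fun j => (f j).1.2.2.2 with haadef
  have hprops : ∀ j, ((E' j : Set X) ⊆ (A : Set X)) ∧ (0 < σ j) ∧ (aa j ∈ (A : Set X)) ∧
      (∀ S : NonemptyCompacts X, (S : Set X) ⊆ (A : Set X) →
        (S : Set X) ⊆ cthickening (σ j) (E' j : Set X) →
        ε₀ / 4 ≤ infDist (aa j) (FK^[nn j] S : Set X)) := by
    intro j
    cases j with
    | zero => exact ⟨hs1 η₀ hη₀ 0, hs4 η₀ hη₀ 0, hs6 η₀ hη₀ 0, hs7 η₀ hη₀ 0⟩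
    | succ i => exact ⟨hs1 _ _ _, hs4 _ _ _, hs6 _ _ _, hs7 _ _ _⟩
  have hE'A : ∀ j, (E' j : Set X) ⊆ (A : Set X) := fun j => (hprops j).1
  have hσpos : ∀ j, 0 < σ j := fun j => (hprops j).2.1
  have h0rel : dist (E' 0) A < η₀ ∧ σ 0 ≤ η₀ := ⟨hs2 η₀ hη₀ 0, hs5 η₀ hη₀ 0⟩
  have hrel : ∀ j, dist (E' (j + 1)) A < σ j / 8 ∧ nn j + 1 ≤ nn (j + 1) ∧
      σ (j + 1) ≤ σ j / 8 := fun j => ⟨hs2 _ _ _, hs3 _ _ _, hs5 _ _ _⟩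
  have hnmono : ∀ j, j ≤ nn j := by
    intro j
    induction j with
    | zero => exact Nat.zero_le _
    | succ i ih => have := (hrel i).2.1; omega
  have hσgeo : ∀ i l, σ (i + l) ≤ σ i * (1 / 8) ^ l := by
    intro i l
    induction l with
    | zero => simp
    | succ l ih =>
      have h1 := (hrel (i + l)).2.2
      have h2 : σ (i + (l + 1)) = σ ((i + l) + 1) := by ring_nf
      rw [h2]
      calc σ ((i + l) + 1) ≤ σ (i + l) / 8 := h1
        _ ≤ (σ i * (1 / 8) ^ l) / 8 := by linarith
        _ = σ i * (1 / 8) ^ (l + 1) := by ring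
  -- for every point of A, a nearby point of the nested intersection
  have hxa : ∀ a ∈ (A : Set X), ∃ x, x ∈ (A : Set X) ∧
      (∀ i, x ∈ cthickening (σ i) (E' i : Set X)) ∧ dist a x ≤ 2 * η₀ := by
    intro a ha
    obtain ⟨y0, hy0E, hy0d⟩ : ∃ y ∈ (E' 0 : Set X), dist a y ≤ η₀ := by
      obtain ⟨y, hy, hxy⟩ := exists_infDist_point (E' 0) a
      refine ⟨y, hy, ?_⟩
      rw [hxy]
      have h1 : infDist a (E' 0 : Set X) ≤ dist A (E' 0) := infDist_le_dist_of_mem' ha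
      rw [dist_comm] at h1
      exact h1.trans h0rel.1.le
    have hstepf : ∀ (j : ℕ) (z : X), z ∈ (A : Set X) →
        ∃ y ∈ (E' (j + 1) : Set X), dist z y ≤ σ j / 8 := by
      intro j z hz
      obtain ⟨y, hy, hxy⟩ := exists_infDist_point (E' (j + 1)) z
      refine ⟨y, hy, ?_⟩
      rw [hxy]
      have h1 : infDist z (E' (j + 1) : Set X) ≤ dist A (E' (j + 1)) :=
        infDist_le_dist_of_mem' hz
      rw [dist_comm] at h1
      exact h1.trans (hrel j).1.le
    choose stepy hstepyE hstepyd using hstepf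
    let cc : ∀ _ : ℕ, {x : X // x ∈ (A : Set X)} :=
      fun j => Nat.rec ⟨y0, hE'A 0 hy0E⟩
        (fun i q => ⟨stepy i q.1 q.2, hE'A (i + 1) (hstepyE i q.1 q.2)⟩) j
    have hccE : ∀ j, (cc j).1 ∈ (E' j : Set X) := by
      intro j
      cases j with
      | zero => exact hy0E
      | succ i => exact hstepyE i (cc i).1 (cc i).2
    have hccd : ∀ j, dist ((cc j).1) ((cc (j + 1)).1) ≤ σ j / 8 :=
      fun j => hstepyd j (cc j).1 (cc j).2
    have hcauchy : CauchySeq (fun j => (cc j).1) := by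
      refine cauchySeq_of_le_geometric (1 / 8) (σ 0 / 8) (by norm_num) (fun l => ?_)
      calc dist ((cc l).1) ((cc (l + 1)).1) ≤ σ l / 8 := hccd l
        _ ≤ (σ 0 * (1 / 8) ^ l) / 8 := by
            have := hσgeo 0 l
            simp only [Nat.zero_add] at this
            linarith
        _ = (σ 0 / 8) * (1 / 8) ^ l := by ring
    obtain ⟨x, hx⟩ := cauchySeq_tendsto_of_complete hcauchy
    have hxA : x ∈ (A : Set X) :=
      A.isCompact.isClosed.mem_of_tendsto hx (Eventually.of_forall (fun j => (cc j).2))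
    have hdix : ∀ i, dist ((cc i).1) x ≤ σ i := by
      intro i
      have ht : Tendsto (fun l => (cc (l + i)).1) atTop (nhds x) :=
        (tendsto_add_atTop_iff_nat i).2 hx
      have hd : ∀ l, dist ((cc (l + i)).1) ((cc (l + 1 + i)).1) ≤ (σ i / 8) * (1 / 8) ^ l := by
        intro l
        have e : l + 1 + i = l + i + 1 := by omega
        rw [e]
        calc dist ((cc (l + i)).1) ((cc (l + i + 1)).1) ≤ σ (l + i) / 8 := hccd (l + i)
          _ ≤ (σ i * (1 / 8) ^ l) / 8 := by
              have := hσgeo i l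
              rw [Nat.add_comm i l] at this
              linarith
          _ = (σ i / 8) * (1 / 8) ^ l := by ring
      have hfin := dist_le_of_le_geometric_of_tendsto₀ (1 / 8) (σ i / 8) (by norm_num) hd ht
      simp only [Nat.zero_add] at hfin
      have hσi := hσpos i
      calc dist ((cc i).1) x ≤ σ i / 8 / (1 - 1 / 8) := hfin
        _ ≤ σ i := by
            rw [div_le_iff₀ (by norm_num : (0:ℝ) < 1 - 1/8)]
            nlinarith
    refine ⟨x, hxA, ?_, ?_⟩
    · intro i
      exact mem_cthickening_of_dist_le x ((cc i).1) (σ i) _ (hccE i)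
        (by rw [dist_comm]; exact hdix i)
    · calc dist a x ≤ dist a ((cc 0).1) + dist ((cc 0).1) x := dist_triangle _ _ _
        _ ≤ η₀ + σ 0 := add_le_add hy0d (hdix 0)
        _ ≤ 2 * η₀ := by linarith [h0rel.2]
  -- the diagonal bad set
  set R : Set X := (A : Set X) ∩ ⋂ i, cthickening (σ i) (E' i : Set X) with hRdef
  have hRcl : IsClosed R :=
    A.isCompact.isClosed.inter (isClosed_iInter (fun i => isClosed_cthickening))
  have hRcpt : IsCompact R := A.isCompact.of_isClosed_subset hRcl inter_subset_left
  have hRne : R.Nonempty := by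
    obtain ⟨a, ha⟩ := A.nonempty
    obtain ⟨x, hxA, hxth, _⟩ := hxa a ha
    exact ⟨x, hxA, mem_iInter.2 hxth⟩
  set RC : NonemptyCompacts X := ⟨⟨R, hRcpt⟩, hRne⟩ with hRCdef
  have hRCcoe : (RC : Set X) = R := rfl
  have hRCA : (RC : Set X) ⊆ (A : Set X) := by rw [hRCcoe]; exact inter_subset_left
  have hRCd : dist RC A ≤ 2 * η₀ := by
    refine dist_le_of_mem_dist (by positivity) ?_ ?_
    · intro x hx
      exact ⟨x, hRCA hx, by rw [dist_self]; positivity⟩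
    · intro b hb
      obtain ⟨x, hxA, hxth, hax⟩ := hxa b hb
      exact ⟨x, by rw [hRCcoe]; exact ⟨hxA, mem_iInter.2 hxth⟩, hax⟩
  have hRCU : RC ∈ U := hz1U RC (by rw [hη₀def] at hRCd; linarith)
  have hbadRC : ∀ j, ε₀ / 4 ≤ dist (FK^[nn j] RC) A := by
    intro j
    have hfat : (RC : Set X) ⊆ cthickening (σ j) (E' j : Set X) := by
      intro x hx
      rw [hRCcoe] at hx
      exact mem_iInter.1 hx.2 j
    have h1 := (hprops j).2.2.2 RC hRCA hfat
    have h2 : infDist (aa j) (FK^[nn j] RC : Set X) ≤ dist A (FK^[nn j] RC) :=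
      infDist_le_dist_of_mem' ((hprops j).2.2.1)
    rw [dist_comm] at h2
    linarith
  have hev := (hattr RC hRCU).eventually_lt_const (show (0:ℝ) < ε₀ / 4 by linarith)
  rw [Filter.eventually_atTop] at hev
  obtain ⟨N, hN⟩ := hev
  have h1 := hN (nn N) (hnmono N)
  have h2 := hbadRC N
  linarith


theorem unif_attr [CompleteSpace X] [LocallyCompactSpace X]
    (hFKcont : Continuous FK)
    (hFK : ∀ B : NonemptyCompacts X, (FK B : Set X) = ⋃ x ∈ (B : Set X), (F x : Set X))
    (hfix : FK A = A) {U : Set (NonemptyCompacts X)} (hUopen : IsOpen U) (hAU : A ∈ U)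
    (hattr : ∀ B ∈ U, Tendsto (fun n => dist (FK^[n] B) A) atTop (nhds 0)) :
    ∃ δz > 0, (∀ B : NonemptyCompacts X, dist B A ≤ δz → B ∈ U) ∧
      ∀ ε > 0, ∃ N : ℕ, ∀ B : NonemptyCompacts X, dist B A ≤ δz →
        ∀ n, N ≤ n → dist (FK^[n] B) A < ε := by
  obtain ⟨δz, hδz, hz1U, hcz⟩ := zone A hUopen hAU
  refine ⟨δz, hδz, hz1U, ?_⟩
  intro ε hε
  obtain ⟨δs, hδs, hstab⟩ := stability hFKcont hFK hfix hUopen hAU hattr ε hε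
  have hBcl : IsClosed {B : NonemptyCompacts X | dist B A ≤ δz} :=
    isClosed_le (Continuous.dist continuous_id continuous_const) continuous_const
  have hBcpt : IsCompact {B : NonemptyCompacts X | dist B A ≤ δz} := by
    refine (isCompact_subsets hcz (A.nonempty.mono (self_subset_cthickening _))).of_isClosed_subset
      hBcl ?_
    intro B hB
    exact subset_cthickening_of_dist_le hB
  have hcover : {B : NonemptyCompacts X | dist B A ≤ δz} ⊆
      ⋃ m : ℕ, FK^[m] ⁻¹' {C : NonemptyCompacts X | dist C A < δs} := by
    intro B hB
    have := (hattr B (hz1U B hB)).eventually_lt_const hδs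
    rw [Filter.eventually_atTop] at this
    obtain ⟨m, hm⟩ := this
    exact mem_iUnion.2 ⟨m, hm m le_rfl⟩
  have hopen : ∀ m : ℕ, IsOpen (FK^[m] ⁻¹' {C : NonemptyCompacts X | dist C A < δs}) := by
    intro m
    have : {C : NonemptyCompacts X | dist C A < δs} = Metric.ball A δs := by
      ext C; simp [Metric.mem_ball]
    rw [this]
    exact Metric.isOpen_ball.preimage (cont_iter hFKcont m)
  obtain ⟨t, ht⟩ := hBcpt.elim_finite_subcover _ hopen hcover
  refine ⟨t.sup id + 1, ?_⟩
  intro B hB n hn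
  obtain ⟨m, hmt, hm⟩ := mem_iUnion₂.1 (ht hB)
  have hmn : m ≤ n := by
    have : m ≤ t.sup id := Finset.le_sup (f := id) hmt
    omega
  have hC : dist (FK^[m] B) A < δs := hm
  have := hstab (FK^[m] B) hC (n - m)
  rwa [← Function.iterate_add_apply, Nat.sub_add_cancel hmn] at this

theorem U_inv [CompleteSpace X] [LocallyCompactSpace X]
    (hFKcont : Continuous FK)
    {U : Set (NonemptyCompacts X)} (hUopen : IsOpen U) (hAU : A ∈ U)
    (hattr : ∀ B ∈ U, Tendsto (fun n => dist (FK^[n] B) A) atTop (nhds 0))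
    (hmax : ∀ V : Set (NonemptyCompacts X), IsOpen V →
      (∀ B ∈ V, Tendsto (fun n => dist (FK^[n] B) A) atTop (nhds 0)) → V ⊆ U) :
    ∀ B ∈ U, FK B ∈ U := by
  obtain ⟨δz, hδz, hz1U, _⟩ := zone A hUopen hAU
  set W : Set (NonemptyCompacts X) :=
    ⋃ N : ℕ, FK^[N] ⁻¹' {C : NonemptyCompacts X | dist C A < δz} with hWdef
  have hWopen : IsOpen W := by
    refine isOpen_iUnion (fun N => ?_)
    have : {C : NonemptyCompacts X | dist C A < δz} = Metric.ball A δz := by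
      ext C; simp [Metric.mem_ball]
    rw [this]
    exact Metric.isOpen_ball.preimage (cont_iter hFKcont N)
  have hWattr : ∀ B ∈ W, Tendsto (fun n => dist (FK^[n] B) A) atTop (nhds 0) := by
    intro B hB
    obtain ⟨N, hN⟩ := mem_iUnion.1 hB
    have h1 : FK^[N] B ∈ U := hz1U _ (le_of_lt hN)
    exact attracted_of_shift N (hattr _ h1)
  have hWU : W ⊆ U := hmax W hWopen hWattr
  intro B hB
  have := (hattr B hB).eventually_lt_const hδz
  rw [Filter.eventually_atTop] at this
  obtain ⟨N, hN⟩ := this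
  have h1 : dist (FK^[N + 1] B) A < δz := hN (N + 1) (by omega)
  refine hWU (mem_iUnion.2 ⟨N, ?_⟩)
  have h2 : FK^[N + 1] B = FK^[N] (FK B) := Function.iterate_succ_apply FK N B
  show dist (FK^[N] (FK B)) A < δz
  rw [← h2]
  exact h1

end Stab2
section Rho

variable (A : NonemptyCompacts X)

/-- auxiliary radial function -/
noncomputable def fkf (k : ℕ) (P : NonemptyCompacts X) : ℝ := max 0 ((k + 1) * dist P A - 1)

/-- basic pseudometric at scale `k`, collapsing a small ball around `A` -/
noncomputable def rho (k : ℕ) (P Q : NonemptyCompacts X) : ℝ :=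
  min 1 (min ((k + 1) * dist P Q) (fkf A k P + fkf A k Q))

variable {A}

lemma fkf_nonneg (k : ℕ) (P : NonemptyCompacts X) : 0 ≤ fkf A k P := le_max_left _ _

lemma rho_nonneg (k : ℕ) (P Q : NonemptyCompacts X) : 0 ≤ rho A k P Q := by
  refine le_min zero_le_one (le_min ?_ ?_)
  · positivity
  · exact add_nonneg (fkf_nonneg k P) (fkf_nonneg k Q)

lemma rho_le_one (k : ℕ) (P Q : NonemptyCompacts X) : rho A k P Q ≤ 1 := min_le_left _ _

lemma rho_comm (k : ℕ) (P Q : NonemptyCompacts X) : rho A k P Q = rho A k Q P := by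
  unfold rho
  rw [dist_comm, add_comm (fkf A k P)]

lemma rho_self (k : ℕ) (P : NonemptyCompacts X) : rho A k P P = 0 := by
  unfold rho
  rw [dist_self, mul_zero]
  rw [min_eq_left (add_nonneg (fkf_nonneg k P) (fkf_nonneg k P))]
  exact min_eq_right zero_le_one

lemma rho_le_dist (k : ℕ) (P Q : NonemptyCompacts X) :
    rho A k P Q ≤ (k + 1) * dist P Q :=
  (min_le_right _ _).trans (min_le_left _ _)

lemma fkf_le (k : ℕ) (S T : NonemptyCompacts X) :
    fkf A k S ≤ fkf A k T + (k + 1) * dist S T := by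
  unfold fkf
  apply max_le
  · have := dist_nonneg (x := S) (y := T)
    have := le_max_left (0:ℝ) ((k + 1) * dist T A - 1)
    positivity
  · have hd : dist S A ≤ dist S T + dist T A := dist_triangle S T A
    have h1 : ((k : ℝ) + 1) * dist S A ≤ (k + 1) * dist S T + (k + 1) * dist T A := by
      have := mul_le_mul_of_nonneg_left hd (by positivity : (0:ℝ) ≤ (k:ℝ) + 1)
      linarith
    have h2 : ((k : ℝ) + 1) * dist T A - 1 ≤ max 0 ((k + 1) * dist T A - 1) := le_max_right _ _
    linarith

lemma rho_triangle (k : ℕ) (P Q R : NonemptyCompacts X) :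
    rho A k P R ≤ rho A k P Q + rho A k Q R := by
  rcases le_or_gt 1 (min ((k + 1 : ℝ) * dist P Q) (fkf A k P + fkf A k Q)) with h1 | h1
  · have : rho A k P Q = 1 := min_eq_left h1
    have h2 := rho_nonneg (A := A) k Q R
    have h3 := rho_le_one (A := A) k P R
    rw [this]
    linarith
  · rcases le_or_gt 1 (min ((k + 1 : ℝ) * dist Q R) (fkf A k Q + fkf A k R)) with h2 | h2
    · have : rho A k Q R = 1 := min_eq_left h2
      have h3 := rho_nonneg (A := A) k P Q
      have h4 := rho_le_one (A := A) k P R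
      rw [this]
      linarith
    · have e1 : rho A k P Q = min ((k + 1 : ℝ) * dist P Q) (fkf A k P + fkf A k Q) :=
        min_eq_right h1.le
      have e2 : rho A k Q R = min ((k + 1 : ℝ) * dist Q R) (fkf A k Q + fkf A k R) :=
        min_eq_right h2.le
      rw [e1, e2]
      have hLHS : rho A k P R ≤ min ((k + 1 : ℝ) * dist P R) (fkf A k P + fkf A k R) :=
        min_le_right _ _
      have hPR : ((k : ℝ) + 1) * dist P R ≤ (k + 1) * dist P Q + (k + 1) * dist Q R := by
        have hd := dist_triangle P Q R
        have := mul_le_mul_of_nonneg_left hd (by positivity : (0:ℝ) ≤ (k:ℝ) + 1)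
        linarith
      have hfP := fkf_le (A := A) k P Q
      have hfR : fkf A k R ≤ fkf A k Q + (k + 1) * dist Q R := by
        have := fkf_le (A := A) k R Q
        rwa [dist_comm R Q] at this
      have hfQ := fkf_nonneg (A := A) k Q
      rcases le_total ((k + 1 : ℝ) * dist P Q) (fkf A k P + fkf A k Q) with hc1 | hc1 <;>
        rcases le_total ((k + 1 : ℝ) * dist Q R) (fkf A k Q + fkf A k R) with hc2 | hc2
      · rw [min_eq_left hc1, min_eq_left hc2]
        have := (hLHS.trans (min_le_left _ _))
        linarith
      · rw [min_eq_left hc1, min_eq_right hc2]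
        have := (hLHS.trans (min_le_right _ _))
        linarith
      · rw [min_eq_right hc1, min_eq_left hc2]
        have := (hLHS.trans (min_le_right _ _))
        linarith
      · rw [min_eq_right hc1, min_eq_right hc2]
        have := (hLHS.trans (min_le_right _ _))
        linarith

lemma rho_vanish {k : ℕ} {P Q : NonemptyCompacts X}
    (hP : dist P A ≤ 1 / (k + 1)) (hQ : dist Q A ≤ 1 / (k + 1)) : rho A k P Q = 0 := by
  have hk : (0:ℝ) < (k : ℝ) + 1 := by positivity
  have hfP : fkf A k P = 0 := by
    unfold fkf
    rw [max_eq_left]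
    rw [le_div_iff₀ hk] at hP
    nlinarith
  have hfQ : fkf A k Q = 0 := by
    unfold fkf
    rw [max_eq_left]
    rw [le_div_iff₀ hk] at hQ
    nlinarith
  unfold rho
  rw [hfP, hfQ, add_zero]
  rw [min_eq_right (by positivity : (0:ℝ) ≤ (k + 1 : ℝ) * dist P Q)]
  exact min_eq_right zero_le_one

lemma rho_one {k : ℕ} {δ : ℝ} {P Q : NonemptyCompacts X}
    (h4 : 4 ≤ ((k : ℝ) + 1) * δ) (hδ : 0 < δ) (hPQ : δ ≤ dist P Q) : rho A k P Q = 1 := by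
  have hk : (0:ℝ) < (k : ℝ) + 1 := by positivity
  have ha : (1:ℝ) ≤ (k + 1) * dist P Q := by
    have := mul_le_mul_of_nonneg_left hPQ hk.le
    linarith
  have hmax : δ / 2 ≤ max (dist P A) (dist Q A) := by
    by_contra hcon
    push_neg at hcon
    have h1 : dist P A < δ / 2 := lt_of_le_of_lt (le_max_left _ _) hcon
    have h2 : dist Q A < δ / 2 := lt_of_le_of_lt (le_max_right _ _) hcon
    have := dist_triangle P A Q
    rw [dist_comm A Q] at this
    linarith
  have hb : (1:ℝ) ≤ fkf A k P + fkf A k Q := by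
    rcases le_total (dist P A) (dist Q A) with hc | hc
    · have h1 : δ / 2 ≤ dist Q A := by
        rcases max_cases (dist P A) (dist Q A) with ⟨he, _⟩ | ⟨he, _⟩
        · rw [he] at hmax; linarith
        · rw [he] at hmax; exact hmax
      have h2 : (1:ℝ) ≤ (k + 1) * dist Q A - 1 := by nlinarith
      have h3 : ((k:ℝ) + 1) * dist Q A - 1 ≤ fkf A k Q := le_max_right _ _
      have h4' := fkf_nonneg (A := A) k P
      linarith
    · have h1 : δ / 2 ≤ dist P A := by
        rcases max_cases (dist P A) (dist Q A) with ⟨he, _⟩ | ⟨he, _⟩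
        · rw [he] at hmax; exact hmax
        · rw [he] at hmax; linarith
      have h2 : (1:ℝ) ≤ (k + 1) * dist P A - 1 := by nlinarith
      have h3 : ((k:ℝ) + 1) * dist P A - 1 ≤ fkf A k P := le_max_right _ _
      have h4' := fkf_nonneg (A := A) k Q
      linarith
  unfold rho
  rw [min_eq_left (le_min ha hb)]

end Rho

end JanosAux

open JanosAux

/-- **Jánoš-type theorem for multivalued operators.**
Let `(X,d)` be a locally compact complete metric space and let `F : X → K(X)` be a
continuous multivalued map inducing the continuous operator `FK` on the hyperspace.
Assume `FK` has an attractor `A` with basin of attraction `U` (an open subset of the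
hyperspace, maximal among open sets all of whose members are attracted to `A`).
Then there is a metric `D` on `U` inducing the same topology as the restriction of the
Hausdorff metric to `U`, such that `FK` maps `U` into itself and is a contraction on `U`
with respect to `D`. -/
theorem attractor_contraction_in_basin
    {X : Type*} [MetricSpace X] [LocallyCompactSpace X] [CompleteSpace X]
    (F : X → NonemptyCompacts X) (hF : Continuous F)
    (FK : NonemptyCompacts X → NonemptyCompacts X) (hFKcont : Continuous FK)
    (hFK : ∀ B : NonemptyCompacts X, (FK B : Set X) = ⋃ x ∈ (B : Set X), (F x : Set X))
    (A : NonemptyCompacts X) (hfix : FK A = A)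
    (U : Set (NonemptyCompacts X)) (hUopen : IsOpen U) (hAU : A ∈ U)
    (hattr : ∀ B ∈ U, Tendsto (fun n => dist (FK^[n] B) A) atTop (nhds 0))
    (hmax : ∀ V : Set (NonemptyCompacts X), IsOpen V →
      (∀ B ∈ V, Tendsto (fun n => dist (FK^[n] B) A) atTop (nhds 0)) → V ⊆ U) :
    ∃ D : NonemptyCompacts X → NonemptyCompacts X → ℝ,
      -- `D` is a metric on `U`:
      (∀ B ∈ U, ∀ B' ∈ U, D B B' = 0 ↔ B = B') ∧
      (∀ B ∈ U, ∀ B' ∈ U, D B B' = D B' B) ∧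
      (∀ B ∈ U, ∀ B' ∈ U, ∀ B'' ∈ U, D B B'' ≤ D B B' + D B' B'') ∧
      -- `D` induces on `U` the same topology as the Hausdorff metric:
      (∀ B ∈ U, ∀ s : Set (NonemptyCompacts X),
        s ∈ nhdsWithin B U ↔ ∃ ε > (0 : ℝ), {C | C ∈ U ∧ D B C < ε} ⊆ s) ∧
      -- `FK` restricted to `U` is a `D`-contraction:
      (∀ B ∈ U, FK B ∈ U) ∧
      ∃ c : ℝ, 0 ≤ c ∧ c < 1 ∧
        ∀ B ∈ U, ∀ B' ∈ U, D (FK B) (FK B') ≤ c * D B B' := by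
  classical
  obtain ⟨δz, hδz, hz1U, hUA⟩ := unif_attr hFKcont hFK hfix hUopen hAU hattr
  obtain ⟨δs0, hδs0, hstabz⟩ := stability hFKcont hFK hfix hUopen hAU hattr δz hδz
  set δs : ℝ := min δs0 δz with hδsdef
  have hδs : 0 < δs := lt_min hδs0 hδz
  have hδsz : δs ≤ δz := min_le_right _ _
  have hstab : ∀ C : NonemptyCompacts X, dist C A < δs → ∀ n, dist (FK^[n] C) A < δz :=
    fun C hC n => hstabz C (lt_of_lt_of_le hC (min_le_left _ _)) n
  have hINV : ∀ B ∈ U, FK B ∈ U := U_inv hFKcont hUopen hAU hattr hmax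
  have hex : ∀ B ∈ U, ∃ n, dist (FK^[n] B) A < δs :=
    fun B hB => (((hattr B hB).eventually_lt_const hδs)).exists
  -- entry times
  set ℰ : NonemptyCompacts X → ℕ :=
    fun B => if h : ∃ n, dist (FK^[n] B) A < δs then Nat.find h else 0 with hℰdef
  have hℰspec : ∀ B : NonemptyCompacts X, (∃ n, dist (FK^[n] B) A < δs) →
      dist (FK^[ℰ B] B) A < δs := by
    intro B h
    simp only [hℰdef, dif_pos h]
    exact Nat.find_spec h
  have hℰmin : ∀ B : NonemptyCompacts X, (∃ n, dist (FK^[n] B) A < δs) →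
      ∀ m, dist (FK^[m] B) A < δs → ℰ B ≤ m := by
    intro B h m hm
    simp only [hℰdef, dif_pos h]
    exact Nat.find_min' h hm
  -- uniform times
  have hTb : ∀ k : ℕ, ∃ N : ℕ, ∀ B : NonemptyCompacts X, dist B A ≤ δz →
      ∀ n, N ≤ n → dist (FK^[n] B) A < 1 / (k + 1) := by
    intro k
    exact hUA (1 / (k + 1)) (by positivity)
  choose Tb hTbspec using hTb
  -- the vanishing lemma
  have hV : ∀ B : NonemptyCompacts X, (∃ n, dist (FK^[n] B) A < δs) →
      ∀ k n : ℕ, ℰ B + Tb k ≤ n → dist (FK^[n] B) A < 1 / (k + 1) := by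
    intro B hB k n hn
    have h1 : dist (FK^[ℰ B] B) A ≤ δz := ((hℰspec B hB).trans_le hδsz).le
    have h2 := hTbspec k (FK^[ℰ B] B) h1 (n - ℰ B) (by omega)
    rwa [← Function.iterate_add_apply, Nat.sub_add_cancel (by omega)] at h2
  -- weights and the metric
  set w : ℕ → ℝ := fun k => (1 / 4) ^ k * (1 / 2) ^ (Tb k) with hwdef
  have hwpos : ∀ k, 0 < w k := fun k => by positivity
  have hwle1 : ∀ k, w k ≤ 1 := by
    intro k
    have h1 : ((1:ℝ) / 4) ^ k ≤ 1 := pow_le_one₀ (by norm_num) (by norm_num)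
    have h2 : ((1:ℝ) / 2) ^ (Tb k) ≤ 1 := pow_le_one₀ (by norm_num) (by norm_num)
    calc w k = (1 / 4) ^ k * (1 / 2) ^ (Tb k) := rfl
      _ ≤ 1 := mul_le_one₀ h1 (by positivity) h2
  set term : NonemptyCompacts X → NonemptyCompacts X → ℕ × ℕ → ℝ :=
    fun B C p => w p.1 * 2 ^ p.2 * rho A p.1 (FK^[p.2] B) (FK^[p.2] C) with htermdef
  have hterm_nonneg : ∀ B C p, 0 ≤ term B C p := by
    intro B C p
    have := rho_nonneg (A := A) p.1 (FK^[p.2] B) (FK^[p.2] C)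
    have := (hwpos p.1).le
    positivity
  have hbound : ∀ B C : NonemptyCompacts X, (∃ n, dist (FK^[n] B) A < δs) →
      (∃ n, dist (FK^[n] C) A < δs) → ∀ p : ℕ × ℕ,
      term B C p ≤ 2 ^ (ℰ B + ℰ C) := by
    rintro B C hB hC ⟨k, n⟩
    by_cases hvan : ℰ B + Tb k ≤ n ∧ ℰ C + Tb k ≤ n
    · have h0 : rho A k (FK^[n] B) (FK^[n] C) = 0 :=
        rho_vanish (hV B hB k n hvan.1).le (hV C hC k n hvan.2).le
      simp only [htermdef, h0, mul_zero]
      positivity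
    · have hn : n ≤ ℰ B + ℰ C + Tb k := by omega
      have h1 : term B C (k, n) ≤ w k * 2 ^ n * 1 := by
        refine mul_le_mul_of_nonneg_left (rho_le_one _ _ _) ?_
        have := (hwpos k).le
        positivity
      have h2 : w k * 2 ^ n ≤ 2 ^ (ℰ B + ℰ C) := by
        have hw1 : w k ≤ (1 / 2 : ℝ) ^ (Tb k) := by
          rw [hwdef]
          have h1' : ((1:ℝ) / 4) ^ k ≤ 1 := pow_le_one₀ (by norm_num) (by norm_num)
          nlinarith [pow_nonneg (by norm_num : (0:ℝ) ≤ 1/2) (Tb k)]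
        have h2' : (2:ℝ) ^ n ≤ 2 ^ (ℰ B + ℰ C + Tb k) :=
          pow_le_pow_right₀ one_le_two hn
        have h3' : ((1:ℝ) / 2) ^ (Tb k) * 2 ^ (ℰ B + ℰ C + Tb k) = 2 ^ (ℰ B + ℰ C) := by
          rw [pow_add, one_div, inv_pow]
          have hne : ((2:ℝ) ^ (Tb k)) ≠ 0 := by positivity
          field_simp
        calc w k * 2 ^ n ≤ (1 / 2 : ℝ) ^ (Tb k) * 2 ^ (ℰ B + ℰ C + Tb k) := by
              apply mul_le_mul hw1 h2' (by positivity) (by positivity)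
          _ = 2 ^ (ℰ B + ℰ C) := h3'
      calc term B C (k, n) ≤ w k * 2 ^ n * 1 := h1
        _ = w k * 2 ^ n := mul_one _
        _ ≤ 2 ^ (ℰ B + ℰ C) := h2
  have hbdd : ∀ B C : NonemptyCompacts X, (∃ n, dist (FK^[n] B) A < δs) →
      (∃ n, dist (FK^[n] C) A < δs) → BddAbove (Set.range (term B C)) := by
    intro B C hB hC
    exact ⟨2 ^ (ℰ B + ℰ C), by rintro x ⟨p, rfl⟩; exact hbound B C hB hC p⟩
  set D : NonemptyCompacts X → NonemptyCompacts X → ℝ :=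
    fun B C => ⨆ p : ℕ × ℕ, term B C p with hDdef
  have hDge : ∀ B C : NonemptyCompacts X, (∃ n, dist (FK^[n] B) A < δs) →
      (∃ n, dist (FK^[n] C) A < δs) → ∀ p, term B C p ≤ D B C :=
    fun B C hB hC p => le_ciSup (hbdd B C hB hC) p
  have hDle : ∀ B C : NonemptyCompacts X, ∀ a : ℝ, (∀ p, term B C p ≤ a) → D B C ≤ a :=
    fun B C a h => ciSup_le h
  -- self distance
  have hDself : ∀ B : NonemptyCompacts X, D B B = 0 := by
    intro B
    have h0 : ∀ p : ℕ × ℕ, term B B p = 0 := by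
      intro p
      simp only [htermdef, rho_self, mul_zero]
    simp only [hDdef, h0, ciSup_const]
  -- positivity for distinct sets
  have hDpos : ∀ B C : NonemptyCompacts X, (∃ n, dist (FK^[n] B) A < δs) →
      (∃ n, dist (FK^[n] C) A < δs) → B ≠ C → ∃ k : ℕ, w k ≤ D B C := by
    intro B C hB hC hne
    have hd : 0 < dist B C := dist_pos.2 hne
    set k : ℕ := Nat.ceil (4 / dist B C) with hkdef
    have hk4 : 4 ≤ ((k : ℝ) + 1) * dist B C := by
      have h1 : 4 / dist B C ≤ (k : ℝ) := Nat.le_ceil _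
      rw [div_le_iff₀ hd] at h1
      nlinarith
    refine ⟨k, ?_⟩
    have h1 : rho A k (FK^[0] B) (FK^[0] C) = 1 := by
      simp only [Function.iterate_zero_apply]
      exact rho_one hk4 hd le_rfl
    have h2 := hDge B C hB hC (k, 0)
    simp only [htermdef, h1, pow_zero, mul_one] at h2
    exact h2
  -- symmetry
  have hDsymm : ∀ B C : NonemptyCompacts X, D B C = D C B := by
    intro B C
    simp only [hDdef, htermdef]
    congr 1
    funext p
    rw [rho_comm]
  -- triangle
  have hDtri : ∀ B B' B'' : NonemptyCompacts X,
      (∃ n, dist (FK^[n] B) A < δs) → (∃ n, dist (FK^[n] B') A < δs) →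
      (∃ n, dist (FK^[n] B'') A < δs) → D B B'' ≤ D B B' + D B' B'' := by
    intro B B' B'' hB hB' hB''
    refine hDle _ _ _ (fun p => ?_)
    have h1 : term B B'' p ≤ term B B' p + term B' B'' p := by
      simp only [htermdef]
      have h2 := rho_triangle (A := A) p.1 (FK^[p.2] B) (FK^[p.2] B') (FK^[p.2] B'')
      have h3 : (0:ℝ) ≤ w p.1 * 2 ^ p.2 := by
        have := (hwpos p.1).le
        positivity
      nlinarith
    exact h1.trans (add_le_add (hDge _ _ hB hB' p) (hDge _ _ hB' hB'' p))
  -- contraction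
  have hDcontr : ∀ B C : NonemptyCompacts X, (∃ n, dist (FK^[n] B) A < δs) →
      (∃ n, dist (FK^[n] C) A < δs) → D (FK B) (FK C) ≤ (1 / 2) * D B C := by
    intro B C hB hC
    refine hDle _ _ _ (fun p => ?_)
    obtain ⟨k, n⟩ := p
    have h1 : term (FK B) (FK C) (k, n) = (1 / 2) * term B C (k, n + 1) := by
      simp only [htermdef]
      rw [← Function.iterate_succ_apply FK n B, ← Function.iterate_succ_apply FK n C]
      rw [pow_succ]
      ring
    rw [h1]
    have h2 := hDge B C hB hC (k, n + 1)
    linarith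
  refine ⟨D, ?_, ?_, ?_, ?_, hINV, ⟨1 / 2, by norm_num, by norm_num, ?_⟩⟩
  · intro B hB B' hB'
    constructor
    · intro h0
      by_contra hne
      obtain ⟨k, hk⟩ := hDpos B B' (hex B hB) (hex B' hB') hne
      rw [h0] at hk
      exact absurd hk (not_le.2 (hwpos k))
    · rintro rfl
      exact hDself B
  · intro B _ B' _
    exact hDsymm B B'
  · intro B hB B' hB' B'' hB''
    exact hDtri B B' B'' (hex B hB) (hex B' hB') (hex B'' hB'')
  · intro B hB s
    rw [nhdsWithin_eq_nhds.2 (hUopen.mem_nhds hB)]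
    constructor
    · intro hs
      obtain ⟨δ, hδpos, hball⟩ := Metric.mem_nhds_iff.1 hs
      set k : ℕ := Nat.ceil (4 / δ) with hkdef
      have hk4 : 4 ≤ ((k : ℝ) + 1) * δ := by
        have h1 : 4 / δ ≤ (k : ℝ) := Nat.le_ceil _
        rw [div_le_iff₀ hδpos] at h1
        nlinarith
      refine ⟨w k, hwpos k, ?_⟩
      rintro C ⟨hCU, hCD⟩
      apply hball
      rw [Metric.mem_ball]
      by_contra hcon
      push_neg at hcon
      have h1 : rho A k (FK^[0] B) (FK^[0] C) = 1 := by
        simp only [Function.iterate_zero_apply]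
        exact rho_one hk4 hδpos (by rwa [dist_comm] at hcon)
      have h2 := hDge B C (hex B hB) (hex C hCU) (k, 0)
      simp only [htermdef, h1, pow_zero, mul_one] at h2
      linarith
    · rintro ⟨ε, hε, hsub⟩
      refine Filter.mem_of_superset ?_ hsub
      obtain ⟨K, hK⟩ : ∃ K : ℕ, ((1:ℝ) / 4) ^ K * 4 ^ (ℰ B) < ε / 2 := by
        have h0 : Tendsto (fun K : ℕ => ((1:ℝ) / 4) ^ K) atTop (nhds 0) :=
          tendsto_pow_atTop_nhds_zero_of_lt_one (by norm_num) (by norm_num)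
        have ht := h0.mul_const ((4:ℝ) ^ (ℰ B))
        rw [zero_mul] at ht
        exact (ht.eventually_lt_const (by linarith)).exists
      set Tmax : ℕ := (Finset.range K).sup Tb with hTmaxdef
      set Nstar : ℕ := ℰ B + Tmax with hNstardef
      set γ : ℝ := (ε / 2) / (2 ^ Nstar * K + 1) with hγdef
      have hγpos : 0 < γ := by positivity
      have hγeq : γ * (2 ^ Nstar * K + 1) = ε / 2 := by
        rw [hγdef]
        field_simp
      have hO : (FK^[ℰ B] ⁻¹' Metric.ball A δs) ∈ nhds B :=
        (Metric.isOpen_ball.preimage (cont_iter hFKcont (ℰ B))).mem_nhds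
          (by rw [Set.mem_preimage, Metric.mem_ball]; exact hℰspec B (hex B hB))
      have h𝒩 : ∀ᶠ C in nhds B,
          ∀ n ∈ Finset.range (Nstar + 1), dist (FK^[n] B) (FK^[n] C) < γ := by
        rw [eventually_all_finset]
        intro n _
        have ht : Tendsto (fun C => dist (FK^[n] B) (FK^[n] C)) (nhds B)
            (nhds (dist (FK^[n] B) (FK^[n] B))) :=
          tendsto_const_nhds.dist ((cont_iter hFKcont n).tendsto B)
        rw [dist_self] at ht
        exact ht.eventually_lt_const hγpos
      filter_upwards [hO, h𝒩, hUopen.mem_nhds hB] with C hC1 hC2 hC3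
      refine ⟨hC3, ?_⟩
      have hC1' : dist (FK^[ℰ B] C) A < δs := by
        rw [Set.mem_preimage, Metric.mem_ball] at hC1
        exact hC1
      have hexC : ∃ n, dist (FK^[n] C) A < δs := ⟨ℰ B, hC1'⟩
      have hℰC : ℰ C ≤ ℰ B := hℰmin C hexC (ℰ B) hC1'
      have hεhalf : D B C ≤ ε / 2 := by
        refine hDle _ _ _ ?_
        rintro ⟨k, n⟩
        by_cases hvan : ℰ B + Tb k ≤ n
        · have h0 : rho A k (FK^[n] B) (FK^[n] C) = 0 :=
            rho_vanish (hV B (hex B hB) k n hvan).le (hV C hexC k n (by omega)).le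
          simp only [htermdef, h0, mul_zero]
          linarith
        · push_neg at hvan
          by_cases hkK : K ≤ k
          · have hr := rho_le_one (A := A) k (FK^[n] B) (FK^[n] C)
            have e1 : ((1:ℝ) / 2) ^ (Tb k) * 2 ^ n ≤ 2 ^ (ℰ B) := by
              have h2' : (2:ℝ) ^ n ≤ 2 ^ (ℰ B + Tb k) :=
                pow_le_pow_right₀ one_le_two (by omega)
              have h3' : ((1:ℝ) / 2) ^ (Tb k) * 2 ^ (ℰ B + Tb k) = 2 ^ (ℰ B) := by
                rw [pow_add, one_div, inv_pow]
                have hne : ((2:ℝ) ^ (Tb k)) ≠ 0 := by positivity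
                field_simp
              calc ((1:ℝ) / 2) ^ (Tb k) * 2 ^ n
                  ≤ ((1:ℝ) / 2) ^ (Tb k) * 2 ^ (ℰ B + Tb k) :=
                    mul_le_mul_of_nonneg_left h2' (by positivity)
                _ = 2 ^ (ℰ B) := h3'
            have e2 : ((1:ℝ) / 4) ^ k ≤ (1 / 4) ^ K :=
              pow_le_pow_of_le_one (by norm_num) (by norm_num) hkK
            have e3 : (2:ℝ) ^ (ℰ B) ≤ 4 ^ (ℰ B) :=
              pow_le_pow_left₀ (by norm_num) (by norm_num) _
            calc term B C (k, n) ≤ w k * 2 ^ n * 1 :=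
                  mul_le_mul_of_nonneg_left hr (by positivity)
              _ = (1 / 4) ^ k * ((1 / 2) ^ (Tb k) * 2 ^ n) := by
                  simp only [hwdef]; ring
              _ ≤ (1 / 4) ^ K * 2 ^ (ℰ B) :=
                  mul_le_mul e2 e1 (by positivity) (by positivity)
              _ ≤ (1 / 4) ^ K * 4 ^ (ℰ B) :=
                  mul_le_mul_of_nonneg_left e3 (by positivity)
              _ ≤ ε / 2 := hK.le
          · push_neg at hkK
            have hTbk : Tb k ≤ Tmax := Finset.le_sup (Finset.mem_range.2 hkK)
            have hnN : n ≤ Nstar := by omega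
            have hdist : dist (FK^[n] B) (FK^[n] C) < γ :=
              hC2 n (Finset.mem_range.2 (by omega))
            have hkK' : ((k:ℝ) + 1) ≤ (K:ℝ) := by
              have : (k + 1 : ℕ) ≤ K := hkK
              exact_mod_cast this
            have p1 : rho A k (FK^[n] B) (FK^[n] C) ≤ (K:ℝ) * γ := by
              refine (rho_le_dist _ _ _).trans ?_
              have hd0 := dist_nonneg (x := FK^[n] B) (y := FK^[n] C)
              nlinarith
            have h2n : (2:ℝ) ^ n ≤ 2 ^ Nstar := pow_le_pow_right₀ one_le_two hnN
            have p2 : w k * 2 ^ n ≤ 2 ^ Nstar := by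
              have h1 := hwle1 k
              have h2 := (hwpos k).le
              nlinarith [pow_nonneg (by norm_num : (0:ℝ) ≤ 2) n]
            have p3 : term B C (k, n) ≤ (2:ℝ) ^ Nstar * ((K:ℝ) * γ) := by
              refine (mul_le_mul p2 p1 (rho_nonneg _ _ _) (by positivity))
            have p4 : (2:ℝ) ^ Nstar * ((K:ℝ) * γ) = γ * (2 ^ Nstar * K + 1) - γ := by ring
            rw [p4] at p3
            linarith
      linarith
  · intro B hB B' hB'
    exact hDcontr B B' (hex B hB) (hex B' hB')
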